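/- Under the standing assumptions, the function θ : (y_∞, y₀] → ℝ defined by θ(y) = -∫_y^{y₀} [((δ+2hλ)(h')² + (δ²+2δhλ+h²λ²+h²λ')h' - h(δ+hλ)h'')/(δ h' (δ+hλ+h'))](x) dx is a strictly decreasing C¹ function mapping (y_∞, y₀] bijectively onto [0, ∞), with θ(y₀) = 0 and θ(y) → +∞ as y ↘ y_∞. -/

import Mathlib

open Real Filter intervalIntegral
open Set

/-- The free boundary `θ(y) = -∫_y^{y₀} D(x)/(δ h'(x)(δ+hλ+h')(x)) dx` is a strictly
decreasing `C¹` bijection from `(y_∞, y₀]` onto `[0,∞)` with `θ(y₀)=0` and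
`θ(y) → +∞` as `y ↘ y_∞`. -/
theorem stmt5 (h lam : ℝ → ℝ) (δ y₀ yInf : ℝ)
    (hC2 : ContDiff ℝ 2 h) (hh0 : h 0 = 0)
    (hh' : ∀ y, 0 < deriv h y)
    (hh'' : ∀ y, 0 ≤ deriv (deriv h) y)
    (hlamC1 : ContDiff ℝ 1 lam) (hlampos : ∀ y, 0 < lam y)
    (hhlam' : ∀ y, 0 < deriv (fun z => h z * lam z) y)
    (hδ : 0 < δ)
    (hy₀lt : y₀ < 0) (hyInflt : yInf < y₀)
    (hy₀ : h y₀ * lam y₀ + δ = 0)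
    (hyInf : h yInf * lam yInf + deriv h yInf + δ = 0)
    (θ : ℝ → ℝ)
    (hθ : ∀ y ∈ Set.Ioc yInf y₀, θ y =
      -∫ x in y..y₀,
        ((δ + 2 * h x * lam x) * (deriv h x) ^ 2
          + (δ ^ 2 + 2 * δ * h x * lam x + (h x) ^ 2 * (lam x) ^ 2
              + (h x) ^ 2 * deriv lam x) * deriv h x
          - h x * (δ + h x * lam x) * deriv (deriv h) x)
        / (δ * deriv h x * (δ + h x * lam x + deriv h x))) :
    StrictAntiOn θ (Set.Ioc yInf y₀) ∧
    ContDiffOn ℝ 1 θ (Set.Ioc yInf y₀) ∧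
    Set.BijOn θ (Set.Ioc yInf y₀) (Set.Ici 0) ∧
    θ y₀ = 0 ∧
    Tendsto θ (nhdsWithin yInf (Set.Ioi yInf)) atTop := by
  have hdh : Differentiable ℝ h := hC2.differentiable (by norm_num)
  have hC1' : ContDiff ℝ 1 (deriv h) := by
    have := (contDiff_succ_iff_deriv (n := 1)).mp (by exact_mod_cast hC2)
    exact this.2.2
  have hdh' : Differentiable ℝ (deriv h) := hC1'.differentiable one_ne_zero
  have hdlam : Differentiable ℝ lam := hlamC1.differentiable one_ne_zero
  have hdA : Differentiable ℝ (fun z => h z * lam z) := hdh.mul hdlam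
  have hderivA : ∀ x, deriv (fun z => h z * lam z) x = deriv h x * lam x + h x * deriv lam x :=
    fun x => deriv_mul (hdh x) (hdlam x)
  have hAmono : StrictMono (fun z => h z * lam z) := strictMono_of_deriv_pos hhlam'
  have hhmono : StrictMono h := strictMono_of_deriv_pos hh'
  set g : ℝ → ℝ := fun z => h z * lam z + deriv h z + δ with hgdef
  have hdg : Differentiable ℝ g := ((hdA.add hdh').add_const δ)
  have hderivg : ∀ x, deriv g x = deriv (fun z => h z * lam z) x + deriv (deriv h) x := by
    intro x; rw [hgdef, deriv_add_const]; exact deriv_add (hdA x) (hdh' x)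
  have hgmono : StrictMono g := strictMono_of_deriv_pos (fun x => by
    rw [hderivg x]; exact add_pos_of_pos_of_nonneg (hhlam' x) (hh'' x))
  have hgInf : g yInf = 0 := hyInf
  have hgpos : ∀ x, yInf < x → 0 < g x := fun x hx => hgInf ▸ hgmono hx
  -- h < 0 on Iic y₀
  have hhy₀ : h y₀ < 0 := by
    nlinarith [hlampos y₀]
  have hhneg : ∀ x ≤ y₀, h x < 0 := fun x hx =>
    lt_of_le_of_lt (hhmono.le_iff_le.mpr hx) hhy₀
  -- δ + hλ ≤ 0 on Iic y₀
  have hdA0 : ∀ x ≤ y₀, δ + h x * lam x ≤ 0 := by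
    intro x hx
    have := hAmono.le_iff_le.mpr hx
    linarith
  -- numerator
  set D : ℝ → ℝ := fun x =>
      ((δ + 2 * h x * lam x) * (deriv h x) ^ 2
        + (δ ^ 2 + 2 * δ * h x * lam x + (h x) ^ 2 * (lam x) ^ 2
            + (h x) ^ 2 * deriv lam x) * deriv h x
        - h x * (δ + h x * lam x) * deriv (deriv h) x) with hDdef
  have hDid : ∀ x, D x = (δ + h x * lam x) * deriv h x * g x
      + h x * (deriv (fun z => h z * lam z) x * deriv h x
          - (δ + h x * lam x) * deriv (deriv h) x) := by
    intro x
    rw [hDdef]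
    simp only [hgdef]
    rw [hderivA x]
    ring
  have hDneg : ∀ x ∈ Icc yInf y₀, D x < 0 := by
    intro x hx
    rw [hDid x]
    have h1 : (δ + h x * lam x) * deriv h x * g x ≤ 0 := by
      rcases eq_or_lt_of_le hx.1 with rfl | hlt
      · rw [hgInf]; ring_nf; rfl
      · exact mul_nonpos_of_nonpos_of_nonneg
          (mul_nonpos_of_nonpos_of_nonneg (hdA0 x hx.2) (hh' x).le) (hgpos x hlt).le
    have h2 : h x * (deriv (fun z => h z * lam z) x * deriv h x) < 0 :=
      mul_neg_of_neg_of_pos (hhneg x hx.2) (mul_pos (hhlam' x) (hh' x))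
    have h3 : 0 ≤ h x * ((δ + h x * lam x) * deriv (deriv h) x) := by
      have : 0 ≤ h x * (δ + h x * lam x) :=
        mul_nonneg_of_nonpos_of_nonpos (hhneg x hx.2).le (hdA0 x hx.2)
      calc (0:ℝ) = h x * (δ + h x * lam x) * 0 := by ring
        _ ≤ h x * (δ + h x * lam x) * deriv (deriv h) x := by
            exact mul_le_mul_of_nonneg_left (hh'' x) this
        _ = h x * ((δ + h x * lam x) * deriv (deriv h) x) := by ring
    nlinarith [h1, h2, h3]
  -- the integrand
  set F : ℝ → ℝ := fun x => D x / (δ * deriv h x * (δ + h x * lam x + deriv h x)) with hFdef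
  have hdenom : ∀ x, yInf < x → 0 < δ * deriv h x * (δ + h x * lam x + deriv h x) := by
    intro x hx
    have : δ + h x * lam x + deriv h x = g x := by rw [hgdef]; ring
    rw [this]
    exact mul_pos (mul_pos hδ (hh' x)) (hgpos x hx)
  have hch : Continuous h := hC2.continuous
  have hch' : Continuous (deriv h) := hC1'.continuous
  have hch'' : Continuous (deriv (deriv h)) := (contDiff_one_iff_deriv.mp hC1').2
  have hclam : Continuous lam := hlamC1.continuous
  have hclam' : Continuous (deriv lam) := (contDiff_one_iff_deriv.mp hlamC1).2
  have hcontD : Continuous D := by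
    rw [hDdef]
    fun_prop
  have hcontden : Continuous (fun x => δ * deriv h x * (δ + h x * lam x + deriv h x)) := by
    fun_prop
  have hcontF : ContinuousOn F (Ioi yInf) := by
    exact ContinuousOn.div hcontD.continuousOn hcontden.continuousOn
      (fun x hx => (hdenom x hx).ne')
  have hFneg : ∀ x, yInf < x → x ≤ y₀ → F x < 0 := by
    intro x hx1 hx2
    exact div_neg_of_neg_of_pos (hDneg x ⟨hx1.le, hx2⟩) (hdenom x hx1)
  -- interval integrability on subintervals of Ioi yInf
  have hintF : ∀ a b, yInf < a → yInf < b → IntervalIntegrable F MeasureTheory.volume a b := by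
    intro a b ha hb
    apply ContinuousOn.intervalIntegrable
    apply hcontF.mono
    exact Set.OrdConnected.uIcc_subset Set.ordConnected_Ioi ha hb
  set Θ : ℝ → ℝ := fun y => ∫ x in y₀..y, F x with hΘdef
  -- FTC
  have hHasDeriv : ∀ y ∈ Ioi yInf, HasDerivAt Θ (F y) y := by
    intro y hy
    apply intervalIntegral.integral_hasDerivAt_right (hintF y₀ y hyInflt hy)
    · exact ContinuousOn.stronglyMeasurableAtFilter isOpen_Ioi hcontF y hy
    · exact hcontF.continuousAt (Ioi_mem_nhds hy)
  have hΘC1 : ContDiffOn ℝ 1 Θ (Ioi yInf) :=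
    (contDiffOn_succ_iff_deriv_of_isOpen (n := 0) isOpen_Ioi).mpr
      ⟨fun y hy => ((hHasDeriv y hy).differentiableAt).differentiableWithinAt,
       by simp,
       by
        rw [contDiffOn_zero]
        exact ContinuousOn.congr hcontF (fun y hy => (hHasDeriv y hy).deriv)⟩
  -- θ agrees with Θ on the interval
  have hθΘ : ∀ y ∈ Ioc yInf y₀, θ y = Θ y := by
    intro y hy
    rw [hθ y hy]
    simp only [hΘdef]
    rw [intervalIntegral.integral_symm y y₀]
  have hθy₀ : θ y₀ = 0 := by
    rw [hθΘ y₀ ⟨hyInflt, le_rfl⟩]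
    simp only [hΘdef]
    exact intervalIntegral.integral_same
  -- strict antitone
  have hanti : StrictAntiOn θ (Ioc yInf y₀) := by
    intro a ha b hb hab
    rw [hθΘ a ha, hθΘ b hb]
    simp only [hΘdef]
    have hadd := intervalIntegral.integral_add_adjacent_intervals
      (hintF y₀ a hyInflt ha.1) (hintF a b ha.1 hb.1)
    have hpos : 0 < ∫ x in a..b, -F x := by
      apply intervalIntegral.intervalIntegral_pos_of_pos_on ((hintF a b ha.1 hb.1).neg)
      · intro x hx
        exact neg_pos.mpr (hFneg x (lt_trans ha.1 hx.1) (le_of_lt (lt_of_lt_of_le hx.2 hb.2)))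
      · exact hab
    rw [intervalIntegral.integral_neg] at hpos

    linarith [hadd]
  -- C¹
  have hθC1 : ContDiffOn ℝ 1 θ (Ioc yInf y₀) :=
    (hΘC1.mono Ioc_subset_Ioi_self).congr hθΘ
  -- nonnegativity
  have hθnonneg : ∀ y ∈ Ioc yInf y₀, 0 ≤ θ y := by
    intro y hy
    rw [hθΘ y hy]
    simp only [hΘdef]
    rw [intervalIntegral.integral_symm y y₀]
    have : (0:ℝ) ≤ ∫ x in y..y₀, -F x := by
      apply intervalIntegral.integral_nonneg hy.2
      intro u hu
      exact neg_nonneg.mpr (hFneg u (lt_of_lt_of_le hy.1 hu.1) hu.2).le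
    rw [intervalIntegral.integral_neg] at this
    linarith
  -- tendsto atTop
  set y₁ : ℝ := (yInf + y₀) / 2 with hy₁def
  have hy₁l : yInf < y₁ := by rw [hy₁def]; linarith
  have hy₁r : y₁ < y₀ := by rw [hy₁def]; linarith
  -- min of -D on Icc yInf y₁
  obtain ⟨x₀, hx₀mem, hx₀min⟩ := (isCompact_Icc (a := yInf) (b := y₁)).exists_isMinOn
    (Set.nonempty_Icc.mpr hy₁l.le) (hcontD.neg.continuousOn)
  set ε : ℝ := -D x₀ with hεdef
  have hεpos : 0 < ε := by
    rw [hεdef]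
    have := hDneg x₀ ⟨hx₀mem.1, hx₀mem.2.trans hy₁r.le⟩
    linarith
  have hεle : ∀ x ∈ Icc yInf y₁, ε ≤ -D x := fun x hx => hx₀min hx
  -- max of δ * h' on Icc yInf y₁
  obtain ⟨x₁, hx₁mem, hx₁max⟩ := (isCompact_Icc (a := yInf) (b := y₁)).exists_isMaxOn
    (Set.nonempty_Icc.mpr hy₁l.le) ((continuous_const.mul hch').continuousOn)
  set M : ℝ := δ * deriv h x₁ with hMdef
  have hMpos : 0 < M := mul_pos hδ (hh' x₁)
  have hMle : ∀ x ∈ Icc yInf y₁, δ * deriv h x ≤ M := fun x hx => hx₁max hx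
  -- max of deriv g on Icc yInf y₁
  have hcontg' : Continuous (deriv g) := by
    have : deriv g = fun x => (deriv h x * lam x + h x * deriv lam x) + deriv (deriv h) x := by
      funext x; rw [hderivg x, hderivA x]
    rw [this]; fun_prop
  obtain ⟨x₂, hx₂mem, hx₂max⟩ := (isCompact_Icc (a := yInf) (b := y₁)).exists_isMaxOn
    (Set.nonempty_Icc.mpr hy₁l.le) hcontg'.continuousOn
  set Kg : ℝ := deriv g x₂ with hKgdef
  have hKgpos : 0 < Kg := by
    rw [hKgdef, hderivg x₂]
    exact add_pos_of_pos_of_nonneg (hhlam' x₂) (hh'' x₂)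
  have hKgle : ∀ x ∈ Icc yInf y₁, deriv g x ≤ Kg := fun x hx => hx₂max hx
  -- bound : g x ≤ Kg (x - yInf) on Ioc yInf y₁
  have hgbound : ∀ x ∈ Ioc yInf y₁, g x ≤ Kg * (x - yInf) := by
    intro x hx
    obtain ⟨c, hc, hceq⟩ := exists_hasDerivAt_eq_slope g (deriv g) hx.1
      (hdg.continuous.continuousOn)
      (fun u _ => (hdg u).hasDerivAt)
    have hcmem : c ∈ Icc yInf y₁ := ⟨hc.1.le, hc.2.le.trans hx.2⟩
    have : g x = deriv g c * (x - yInf) := by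
      rw [hceq, hgInf]
      have hne : x - yInf ≠ 0 := by intro hh0'; have := hx.1; linarith [sub_eq_zero.mp hh0']
      field_simp
      ring
    rw [this]
    exact mul_le_mul_of_nonneg_right (hKgle c hcmem) (by linarith [hx.1])
  -- the comparison constant
  set c₀ : ℝ := ε / (M * Kg) with hc₀def
  have hc₀pos : 0 < c₀ := div_pos hεpos (mul_pos hMpos hKgpos)
  -- pointwise lower bound for -F
  have hFlow : ∀ x ∈ Ioc yInf y₁, c₀ / (x - yInf) ≤ -F x := by
    intro x hx
    have hxIcc : x ∈ Icc yInf y₁ := ⟨hx.1.le, hx.2⟩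
    have hxy₀ : x ≤ y₀ := hx.2.trans hy₁r.le
    have hgeq : δ + h x * lam x + deriv h x = g x := by rw [hgdef]; ring
    have hdenpos : 0 < δ * deriv h x * (δ + h x * lam x + deriv h x) := hdenom x hx.1
    have hden_le : δ * deriv h x * (δ + h x * lam x + deriv h x) ≤ M * (Kg * (x - yInf)) := by
      rw [hgeq]
      have h1 : δ * deriv h x * g x ≤ M * g x :=
        mul_le_mul_of_nonneg_right (hMle x hxIcc) (hgpos x hx.1).le
      have h2 : M * g x ≤ M * (Kg * (x - yInf)) :=
        mul_le_mul_of_nonneg_left (hgbound x hx) hMpos.le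
      linarith
    have hstep1 : c₀ / (x - yInf) = ε / (M * (Kg * (x - yInf))) := by
      rw [hc₀def, div_div]
      ring_nf
    have hstep2 : ε / (M * (Kg * (x - yInf))) ≤ ε / (δ * deriv h x * (δ + h x * lam x + deriv h x)) :=
      div_le_div_of_nonneg_left hεpos.le hdenpos hden_le
    have hstep3 : ε / (δ * deriv h x * (δ + h x * lam x + deriv h x))
        ≤ (-D x) / (δ * deriv h x * (δ + h x * lam x + deriv h x)) :=
      (div_le_div_iff_of_pos_right hdenpos).mpr (hεle x hxIcc)
    have : -F x = (-D x) / (δ * deriv h x * (δ + h x * lam x + deriv h x)) := by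
      rw [hFdef]; simp only [neg_div]
    rw [this, hstep1]
    exact hstep2.trans hstep3
  -- lower bound for θ on Ioc yInf y₁
  have hθlow : ∀ y ∈ Ioc yInf y₁, c₀ * Real.log ((y₁ - yInf) / (y - yInf)) ≤ θ y := by
    intro y hy
    have hymem : y ∈ Ioc yInf y₀ := ⟨hy.1, hy.2.trans hy₁r.le⟩
    rw [hθΘ y hymem]
    simp only [hΘdef]
    rw [intervalIntegral.integral_symm y y₀,
      show -∫ x in y..y₀, F x = ∫ x in y..y₀, -F x from (intervalIntegral.integral_neg).symm]
    have hsplit : (∫ x in y..y₀, -F x)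
        = (∫ x in y..y₁, -F x) + ∫ x in y₁..y₀, -F x :=
      (intervalIntegral.integral_add_adjacent_intervals
        ((hintF y y₁ hy.1 hy₁l).neg) ((hintF y₁ y₀ hy₁l hyInflt).neg)).symm
    have hnn2 : (0:ℝ) ≤ ∫ x in y₁..y₀, -F x := by
      apply intervalIntegral.integral_nonneg hy₁r.le
      intro u hu
      exact neg_nonneg.mpr (hFneg u (lt_of_lt_of_le hy₁l hu.1) hu.2).le
    -- integrability of the comparison function
    have hintc : IntervalIntegrable (fun x => c₀ * (x - yInf)⁻¹) MeasureTheory.volume y y₁ := by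
      apply ContinuousOn.intervalIntegrable
      apply ContinuousOn.mul continuousOn_const
      apply ContinuousOn.inv₀ (by fun_prop)
      intro x hx
      rw [Set.uIcc_of_le hy.2] at hx
      have : yInf < x := lt_of_lt_of_le hy.1 hx.1
      intro hc; rw [sub_eq_zero] at hc; exact absurd hc.symm this.ne
    have hmono : (∫ x in y..y₁, c₀ * (x - yInf)⁻¹) ≤ ∫ x in y..y₁, -F x := by
      apply intervalIntegral.integral_mono_on hy.2 hintc ((hintF y y₁ hy.1 hy₁l).neg)
      intro x hx
      have hxmem : x ∈ Ioc yInf y₁ := ⟨lt_of_lt_of_le hy.1 hx.1, hx.2⟩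
      have := hFlow x hxmem
      rw [div_eq_mul_inv] at this
      exact this
    have heval : (∫ x in y..y₁, c₀ * (x - yInf)⁻¹)
        = c₀ * Real.log ((y₁ - yInf) / (y - yInf)) := by
      rw [intervalIntegral.integral_const_mul]
      congr 1
      have := intervalIntegral.integral_comp_sub_right (a := y) (b := y₁)
        (fun u => u⁻¹) yInf
      rw [this]
      exact integral_inv_of_pos (by linarith [hy.1]) (by linarith [hy₁l])
    linarith [hmono, hnn2, heval, hsplit]
  -- tendsto
  have hB : Tendsto (fun y => c₀ * Real.log ((y₁ - yInf) / (y - yInf)))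
      (nhdsWithin yInf (Set.Ioi yInf)) atTop := by
    apply Filter.Tendsto.const_mul_atTop hc₀pos
    apply Real.tendsto_log_atTop.comp
    have h1 : Tendsto (fun y => y - yInf) (nhdsWithin yInf (Set.Ioi yInf)) (nhdsWithin 0 (Set.Ioi 0)) := by
      apply tendsto_nhdsWithin_of_tendsto_nhds_of_eventually_within
      · have : Tendsto (fun y : ℝ => y - yInf) (nhds yInf) (nhds (yInf - yInf)) :=
          (continuous_id.sub continuous_const).tendsto yInf
        simpa using this.mono_left nhdsWithin_le_nhds
      · exact eventually_mem_nhdsWithin.mono (fun y hy => Set.mem_Ioi.mpr (sub_pos.mpr hy))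
    have h2 : Tendsto (fun y => (y - yInf)⁻¹) (nhdsWithin yInf (Set.Ioi yInf)) atTop :=
      tendsto_inv_nhdsGT_zero.comp h1
    have h3 := Filter.Tendsto.const_mul_atTop (sub_pos.mpr hy₁l) h2
    apply h3.congr
    intro y
    rw [div_eq_mul_inv]
  have htend : Tendsto θ (nhdsWithin yInf (Set.Ioi yInf)) atTop := by
    apply tendsto_atTop_mono' _ _ hB
    filter_upwards [Ioc_mem_nhdsGT_of_mem ⟨le_rfl, hy₁l⟩] with y hy
    exact hθlow y hy
  -- surjectivity
  have hsurj : Set.SurjOn θ (Ioc yInf y₀) (Ici 0) := by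
    intro z hz
    have h1 : ∀ᶠ y in nhdsWithin yInf (Set.Ioi yInf), z ≤ θ y := htend.eventually_ge_atTop z
    have h2 : ∀ᶠ y in nhdsWithin yInf (Set.Ioi yInf), y ∈ Ioc yInf y₀ :=
      Ioc_mem_nhdsGT_of_mem ⟨le_rfl, hyInflt⟩
    obtain ⟨y, hy1, hy2⟩ := (h1.and h2).exists
    have hcont : ContinuousOn θ (Icc y y₀) :=
      hθC1.continuousOn.mono (fun u hu => ⟨lt_of_lt_of_le hy2.1 hu.1, hu.2⟩)
    have hivt := intermediate_value_Icc' hy2.2 hcont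
    have hzmem : z ∈ Icc (θ y₀) (θ y) := ⟨hθy₀ ▸ hz, hy1⟩
    obtain ⟨x, hxmem, hxz⟩ := hivt hzmem
    exact ⟨x, ⟨lt_of_lt_of_le hy2.1 hxmem.1, hxmem.2⟩, hxz⟩
  exact ⟨hanti, hθC1, ⟨fun y hy => hθnonneg y hy, hanti.injOn, hsurj⟩, hθy₀, htend⟩
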